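/- Let P ∈ C[x,y] with deg_y P = d, and let R(x) = Res_y(P, P_y) be the resultant of P and its y-derivative with respect to y. Suppose α ∈ C̄ (the algebraic closure) is a root of R of multiplicity exactly k. Then the squarefree part S(y) = P(α,y) / gcd(P(α,y), P_y(α,y)) of P(α,y) has degree at least d − k. -/

import Mathlib

/-- The Sylvester matrix of `p` (of degree `n`) and `q` (of degree `m`):
an `(m+n)×(m+n)` matrix whose first `m` columns are shifted coefficient
vectors of `p` and last `n` columns shifted coefficient vectors of `q`. -/
noncomputable def sylvesterMatrix {R : Type*} [CommRing R]
    (p q : Polynomial R) (n m : ℕ) : Matrix (Fin (m + n)) (Fin (m + n)) R :=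
  Matrix.of fun i j =>
    if (j : ℕ) < m then
      (if (j : ℕ) ≤ (i : ℕ) then p.coeff ((i : ℕ) - (j : ℕ)) else 0)
    else
      (if (j : ℕ) - m ≤ (i : ℕ) then q.coeff ((i : ℕ) - ((j : ℕ) - m)) else 0)

open Polynomial Finset

open Polynomial Finset in
lemma aux_L0 {A : Type*} [CommRing A] (p u : Polynomial A) (m : ℕ)
    (hu : ∀ t, m ≤ t → u.coeff t = 0) (i : ℕ) :
    ∑ t ∈ Finset.range m, (if t ≤ i then p.coeff (i - t) else 0) * u.coeff t
      = (u * p).coeff i := by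
  have h1 : (u * p).coeff i = ∑ t ∈ Finset.range (i + 1), u.coeff t * p.coeff (i - t) := by
    rw [Polynomial.coeff_mul, Finset.Nat.sum_antidiagonal_eq_sum_range_succ_mk]
  have h2 : ∑ t ∈ Finset.range m, (if t ≤ i then p.coeff (i - t) else 0) * u.coeff t
      = ∑ t ∈ Finset.range (m + i + 1),
          (if t ≤ i then u.coeff t * p.coeff (i - t) else 0) := by
    calc ∑ t ∈ Finset.range m, (if t ≤ i then p.coeff (i - t) else 0) * u.coeff t
        = ∑ t ∈ Finset.range m, (if t ≤ i then u.coeff t * p.coeff (i - t) else 0) := by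
          refine Finset.sum_congr rfl fun t ht => ?_
          split <;> simp [mul_comm]
      _ = ∑ t ∈ Finset.range (m + i + 1),
          (if t ≤ i then u.coeff t * p.coeff (i - t) else 0) := by
          refine Finset.sum_subset (Finset.range_subset_range.2 (by omega)) ?_
          intro t ht hnt
          simp only [Finset.mem_range] at ht hnt
          rw [hu t (by omega)]
          split <;> simp
  have h3 : ∑ t ∈ Finset.range (i + 1), u.coeff t * p.coeff (i - t)
      = ∑ t ∈ Finset.range (m + i + 1),
          (if t ≤ i then u.coeff t * p.coeff (i - t) else 0) := by
    calc ∑ t ∈ Finset.range (i + 1), u.coeff t * p.coeff (i - t)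
        = ∑ t ∈ Finset.range (i + 1), (if t ≤ i then u.coeff t * p.coeff (i - t) else 0) := by
          refine Finset.sum_congr rfl fun t ht => ?_
          simp only [Finset.mem_range] at ht
          rw [if_pos (by omega)]
      _ = ∑ t ∈ Finset.range (m + i + 1),
          (if t ≤ i then u.coeff t * p.coeff (i - t) else 0) := by
          refine Finset.sum_subset (Finset.range_subset_range.2 (by omega)) ?_
          intro t ht hnt
          simp only [Finset.mem_range] at hnt
          rw [if_neg (by omega)]
  rw [h1, h2, h3]

open Polynomial Finset in
lemma aux_syl_sum {A : Type*} [CommRing A] (p q u v : Polynomial A) (n m : ℕ)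
    (hu : ∀ t, m ≤ t → u.coeff t = 0) (hv : ∀ t, n ≤ t → v.coeff t = 0) (i : Fin (m + n)) :
    ∑ t : Fin (m + n), sylvesterMatrix p q n m i t *
        (if (t : ℕ) < m then u.coeff (t : ℕ) else v.coeff ((t : ℕ) - m))
      = (u * p + v * q).coeff (i : ℕ) := by
  rw [Fin.sum_univ_add]
  have e1 : ∑ t : Fin m, sylvesterMatrix p q n m i (Fin.castAdd n t) *
      (if ((Fin.castAdd n t : Fin (m+n)) : ℕ) < m then u.coeff ((Fin.castAdd n t : Fin (m+n)) : ℕ)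
        else v.coeff (((Fin.castAdd n t : Fin (m+n)) : ℕ) - m))
      = ∑ t ∈ Finset.range m, (if t ≤ (i:ℕ) then p.coeff ((i:ℕ) - t) else 0) * u.coeff t := by
    rw [Finset.sum_range fun t => (if t ≤ (i:ℕ) then p.coeff ((i:ℕ) - t) else 0) * u.coeff t]
    refine Finset.sum_congr rfl fun t _ => ?_
    have ht : ((Fin.castAdd n t : Fin (m+n)) : ℕ) = (t : ℕ) := rfl
    simp only [sylvesterMatrix, Matrix.of_apply, ht, t.isLt, if_pos]
  have e2 : ∑ t : Fin n, sylvesterMatrix p q n m i (Fin.natAdd m t) *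
      (if ((Fin.natAdd m t : Fin (m+n)) : ℕ) < m then u.coeff ((Fin.natAdd m t : Fin (m+n)) : ℕ)
        else v.coeff (((Fin.natAdd m t : Fin (m+n)) : ℕ) - m))
      = ∑ t ∈ Finset.range n, (if t ≤ (i:ℕ) then q.coeff ((i:ℕ) - t) else 0) * v.coeff t := by
    rw [Finset.sum_range fun t => (if t ≤ (i:ℕ) then q.coeff ((i:ℕ) - t) else 0) * v.coeff t]
    refine Finset.sum_congr rfl fun t _ => ?_
    have ht : ((Fin.natAdd m t : Fin (m+n)) : ℕ) = m + (t : ℕ) := rfl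
    simp only [sylvesterMatrix, Matrix.of_apply, ht]
    rw [if_neg (by omega), if_neg (by omega : ¬ m + (t:ℕ) < m)]
    simp
  rw [e1, e2, aux_L0 p u m hu, aux_L0 q v n hv, Polynomial.coeff_add]

open Polynomial Finset in
lemma aux_det_dvd {K : Type*} [Field K] {n' : ℕ}
    (M : Matrix (Fin n') (Fin n') (Polynomial K)) (α : K)
    (p : Fin n' → Prop) [DecidablePred p]
    (h : ∀ i t, p t → (M i t).eval α = 0) :
    (X - C α) ^ (Finset.univ.filter p).card ∣ M.det := by
  set N : Matrix (Fin n') (Fin n') (Polynomial K) :=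
    Matrix.of fun i t => if p t then M i t /ₘ (X - C α) else M i t with hN
  have hM : M = N * Matrix.diagonal (fun t => if p t then X - C α else 1) := by
    ext i t
    rw [Matrix.mul_diagonal]
    by_cases hp : p t
    · simp only [hN, Matrix.of_apply, hp, if_pos]
      have hdvd : (X - C α) ∣ M i t := dvd_iff_isRoot.2 (h i t hp)
      have h0 : (M i t) %ₘ (X - C α) = 0 :=
        (modByMonic_eq_zero_iff_dvd (monic_X_sub_C α)).2 hdvd
      have := modByMonic_add_div (M i t) (q := X - C α)
      rw [h0, zero_add] at this
      rw [mul_comm, this]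
    · simp [hN, hp]
  rw [hM, Matrix.det_mul, Matrix.det_diagonal]
  have : ∏ t : Fin n', (if p t then X - C α else 1)
      = (X - C α) ^ (Finset.univ.filter p).card := by
    rw [Finset.prod_ite, Finset.prod_const, Finset.prod_const_one, mul_one]
  rw [this]
  exact Dvd.dvd.mul_left dvd_rfl N.det

lemma aux_card_le {N c a : ℕ} (h : a + c ≤ N) :
    c ≤ (Finset.univ.filter (fun t : Fin N => a ≤ (t : ℕ) ∧ (t : ℕ) < a + c)).card := by
  have := Finset.card_le_card_of_injOn (f := fun j : Fin c => (⟨a + (j : ℕ), by omega⟩ : Fin N))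
    (s := Finset.univ) (t := Finset.univ.filter (fun t : Fin N => a ≤ (t : ℕ) ∧ (t : ℕ) < a + c))
    (fun j _ => by simp)
    (fun j _ j' _ hjj => by
      have : a + (j : ℕ) = a + (j' : ℕ) := congrArg Fin.val hjj
      exact Fin.ext (by omega))
  simpa using this

/-- If `P ∈ C[x,y]` has `deg_y P = d`, `R(x) = Res_y(P, P_y)`, and `α` in the
algebraic closure is a root of `R` of multiplicity exactly `k`, then the
squarefree part `S(y) = P(α,y)/gcd(P(α,y), P_y(α,y))` of `P(α,y)` has degree
at least `d - k`. -/
theorem stmt4 {C K : Type*} [Field C] [CharZero C] [Field K] [DecidableEq K] [IsAlgClosed K]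
    [Algebra C K]
    (P : Polynomial (Polynomial C)) (d : ℕ)
    (hd : P.natDegree = d) (hd1 : 1 ≤ d)
    (R : Polynomial C)
    (hR : R = (sylvesterMatrix P (Polynomial.derivative P) d (d - 1)).det)
    (hR0 : R ≠ 0)
    (α : K) (k : ℕ)
    (hroot : Polynomial.aeval α R = 0)
    (hk : (R.map (algebraMap C K)).rootMultiplicity α = k) :
    d - k ≤ ((P.map ((Polynomial.aeval α).toRingHom : Polynomial C →+* K)) /
      EuclideanDomain.gcd (P.map ((Polynomial.aeval α).toRingHom : Polynomial C →+* K))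
        (Polynomial.derivative
          (P.map ((Polynomial.aeval α).toRingHom : Polynomial C →+* K)))).natDegree := by
  classical
  set ψ : Polynomial C →+* K := ((Polynomial.aeval α).toRingHom : Polynomial C →+* K) with hψ
  set f : Polynomial K := P.map ψ with hfdef
  set g : Polynomial K := EuclideanDomain.gcd f (derivative f) with hgdef
  set S : Polynomial K := f / g with hSdef
  set φ : Polynomial C →+* Polynomial K := Polynomial.mapRingHom (algebraMap C K) with hφ
  set M' : Matrix (Fin ((d-1) + d)) (Fin ((d-1) + d)) (Polynomial K) :=
    (sylvesterMatrix P (Polynomial.derivative P) d (d - 1)).map φ with hM'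
  have hcomp : ∀ r : Polynomial C, (φ r).eval α = ψ r := by
    intro r
    show (Polynomial.map (algebraMap C K) r).eval α = ψ r
    rw [Polynomial.eval_map]
    exact (Polynomial.aeval_def α r).symm
  have hRK : R.map (algebraMap C K) = M'.det := by
    rw [hR]
    exact RingHom.map_det φ _
  have hRK0 : R.map (algebraMap C K) ≠ 0 :=
    Polynomial.map_ne_zero hR0
  have hMeval : ∀ i t, (M' i t).eval α = sylvesterMatrix f (derivative f) d (d-1) i t := by
    intro i t
    have hch : ∀ r, (φ (P.coeff r)).eval α = f.coeff r := fun r => by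
      rw [hcomp, hfdef, Polynomial.coeff_map]
    have hch' : ∀ r, (φ ((Polynomial.derivative P).coeff r)).eval α
        = (derivative f).coeff r := fun r => by
      rw [hcomp, hfdef, Polynomial.derivative_map, Polynomial.coeff_map]
    simp only [hM', Matrix.map_apply, sylvesterMatrix, Matrix.of_apply,
      apply_ite φ, map_zero, apply_ite (Polynomial.eval α), Polynomial.eval_zero, hch, hch']
  have hmult : ∀ (a c : ℕ), a + c ≤ (d-1) + d →
      (∀ i t : Fin ((d-1)+d), a ≤ (t:ℕ) ∧ (t:ℕ) < a + c →
        sylvesterMatrix f (derivative f) d (d-1) i t = 0) → c ≤ k := by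
    intro a c hac hvan
    have hdvd : (X - Polynomial.C α) ^ c ∣ M'.det := by
      refine (pow_dvd_pow _ (aux_card_le hac)).trans (aux_det_dvd M' α _ ?_)
      intro i t ht
      rw [hMeval, hvan i t ht]
    rw [← hRK] at hdvd
    rw [← hk]
    exact (Polynomial.le_rootMultiplicity_iff hRK0).2 hdvd
  by_cases hf' : derivative f = 0
  · have hdk : d ≤ k := by
      refine hmult (d-1) d (by omega) ?_
      intro i t ht
      obtain ⟨h1, h2⟩ := ht
      simp only [sylvesterMatrix, Matrix.of_apply]
      rw [if_neg (by omega), hf']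
      simp
    have h0 : d - k = 0 := by omega
    rw [h0]; exact Nat.zero_le _
  · have hf0 : f ≠ 0 := fun h => hf' (by rw [h]; simp)
    have hg0 : g ≠ 0 := fun h => hf0 ((EuclideanDomain.gcd_eq_zero_iff).1 h).1
    have hgf : g ∣ f := EuclideanDomain.gcd_dvd_left f (derivative f)
    have hgf' : g ∣ derivative f := EuclideanDomain.gcd_dvd_right f (derivative f)
    have hfS : g * S = f := EuclideanDomain.mul_div_cancel' hg0 hgf
    set T : Polynomial K := derivative f / g with hTdef
    have hfT : g * T = derivative f := EuclideanDomain.mul_div_cancel' hg0 hgf'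
    have hS0 : S ≠ 0 := fun h => hf0 (by rw [← hfS, h, mul_zero])
    set s : ℕ := S.natDegree with hs
    have hdegsum : g.natDegree + s = f.natDegree := by
      rw [← hfS, Polynomial.natDegree_mul hg0 hS0]
    have hfdeg0 : f.natDegree ≠ 0 := by
      intro h
      obtain ⟨a, ha⟩ := Polynomial.natDegree_eq_zero.1 h
      exact hf' (by rw [← ha, Polynomial.derivative_C])
    have hdf : (derivative f).natDegree < f.natDegree :=
      Polynomial.natDegree_derivative_lt hfdeg0
    have hgled : g.natDegree ≤ (derivative f).natDegree :=
      Polynomial.natDegree_le_of_dvd hgf' hf'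
    have hs1 : 1 ≤ s := by omega
    have hTs : T.natDegree < s := by
      by_cases hT0 : T = 0
      · rw [hT0]; simpa using (show 0 < s by omega)
      · have hTg : g.natDegree + T.natDegree = (derivative f).natDegree := by
          rw [← hfT, Polynomial.natDegree_mul hg0 hT0]
        omega
    by_cases hds : d ≤ s
    · exact le_trans (Nat.sub_le d k) hds
    have hsd : s < d := by omega
    set c : ℕ := d - s with hc
    have hc1 : 1 ≤ c := by omega
    set κ : ℕ → Fin ((d-1)+d) → K := fun j t =>
      if (t : ℕ) < d - 1 then (-(T * X ^ j)).coeff (t : ℕ)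
      else (S * X ^ j).coeff ((t : ℕ) - (d - 1)) with hκ
    set B : Matrix (Fin ((d-1)+d)) (Fin ((d-1)+d)) (Polynomial K) :=
      Matrix.of fun i col =>
        if d - 1 + s ≤ (col : ℕ) ∧ (col : ℕ) < d - 1 + s + c then
          Polynomial.C (κ ((col : ℕ) - (d - 1 + s)) i)
        else if i = col then 1 else 0 with hB
    have hStri : ∀ j : ℕ, (S * X ^ j).natDegree ≤ s + j := by
      intro j
      refine le_trans (Polynomial.natDegree_mul_le) ?_
      simp [Polynomial.natDegree_X_pow]
      exact le_rfl
    have hTtri : ∀ j : ℕ, (T * X ^ j).natDegree ≤ T.natDegree + j := by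
      intro j
      refine le_trans (Polynomial.natDegree_mul_le) ?_
      simp [Polynomial.natDegree_X_pow]
    have hBtri : B.BlockTriangular id := by
      intro i col hlt
      have hlt' : (col : ℕ) < (i : ℕ) := hlt
      simp only [hB, Matrix.of_apply]
      by_cases hcol : d - 1 + s ≤ (col : ℕ) ∧ (col : ℕ) < d - 1 + s + c
      · rw [if_pos hcol]
        have hni : ¬ ((i : ℕ) < d - 1) := by omega
        simp only [hκ, if_neg hni]
        rw [Polynomial.coeff_eq_zero_of_natDegree_lt
          (lt_of_le_of_lt (hStri _) (by omega)), map_zero]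
      · have hne : ¬ i = col := by
          intro h
          rw [h] at hlt'
          omega
        rw [if_neg hcol, if_neg hne]
    have hBdiag : ∀ i : Fin ((d-1)+d),
        (B i i).eval α = if d - 1 + s ≤ (i : ℕ) ∧ (i : ℕ) < d - 1 + s + c
          then S.leadingCoeff else 1 := by
      intro i
      simp only [hB, Matrix.of_apply]
      by_cases hcol : d - 1 + s ≤ (i : ℕ) ∧ (i : ℕ) < d - 1 + s + c
      · rw [if_pos hcol, if_pos hcol, Polynomial.eval_C]
        have hni : ¬ ((i : ℕ) < d - 1) := by omega
        simp only [hκ, if_neg hni]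
        have he : (i : ℕ) - (d - 1) = s + ((i : ℕ) - (d - 1 + s)) := by omega
        rw [he, Polynomial.coeff_mul_X_pow, Polynomial.leadingCoeff]
      · rw [if_neg hcol, if_neg hcol]
        simp
    have hdetB : (B.det).eval α ≠ 0 := by
      rw [Matrix.det_of_upperTriangular hBtri, Polynomial.eval_prod]
      rw [Finset.prod_ne_zero_iff]
      intro i _
      rw [hBdiag i]
      split
      · exact Polynomial.leadingCoeff_ne_zero.2 hS0
      · exact one_ne_zero
    have hB0 : B.det ≠ 0 := fun h => hdetB (by rw [h, Polynomial.eval_zero])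
    have hMB : ∀ i t : Fin ((d-1)+d),
        d - 1 + s ≤ (t:ℕ) ∧ (t:ℕ) < d - 1 + s + c → ((M' * B) i t).eval α = 0 := by
      intro i col hcol
      set j : ℕ := (col : ℕ) - (d - 1 + s) with hj
      have hjc : j < c := by omega
      have hTsd : T.natDegree + j < d - 1 := by omega
      have hu : ∀ t, d - 1 ≤ t → (-(T * X ^ j)).coeff t = 0 := by
        intro t ht
        have h1 : T.natDegree + j < t := by omega
        rw [Polynomial.coeff_neg,
          Polynomial.coeff_eq_zero_of_natDegree_lt (lt_of_le_of_lt (hTtri j) h1),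
          neg_zero]
      have hv : ∀ t, d ≤ t → (S * X ^ j).coeff t = 0 := by
        intro t ht
        exact Polynomial.coeff_eq_zero_of_natDegree_lt (lt_of_le_of_lt (hStri j) (by omega))
      have hsum := aux_syl_sum f (derivative f) (-(T * X ^ j)) (S * X ^ j) d (d-1) hu hv i
      have hzero : -(T * X ^ j) * f + (S * X ^ j) * derivative f = 0 := by
        rw [← hfT, ← hfS]; ring
      have hterm : ∀ t : Fin ((d-1)+d),
          (M' i t * B t col).eval α
            = sylvesterMatrix f (derivative f) d (d-1) i t *
              (if (t:ℕ) < d - 1 then (-(T * X ^ j)).coeff (t:ℕ)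
                else (S * X ^ j).coeff ((t:ℕ) - (d-1))) := by
        intro t
        rw [Polynomial.eval_mul, hMeval]
        congr 1
        simp only [hB, Matrix.of_apply, if_pos hcol, Polynomial.eval_C, hκ]
        rfl
      rw [Matrix.mul_apply, Polynomial.eval_finset_sum,
        Finset.sum_congr rfl (fun t _ => hterm t), hsum, hzero]
      simp
    have hck : c ≤ k := by
      have hdvd : (X - Polynomial.C α) ^ c ∣ (M' * B).det := by
        have hcard := aux_card_le (N := (d-1)+d) (c := c) (a := d - 1 + s) (by omega)
        refine (pow_dvd_pow _ hcard).trans (aux_det_dvd (M' * B) α _ ?_)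
        exact hMB
      rw [Matrix.det_mul] at hdvd
      have hne : M'.det * B.det ≠ 0 := mul_ne_zero (hRK ▸ hRK0) hB0
      have h1 : c ≤ Polynomial.rootMultiplicity α (M'.det * B.det) :=
        (Polynomial.le_rootMultiplicity_iff hne).2 hdvd
      rw [Polynomial.rootMultiplicity_mul hne] at h1
      have h2 : Polynomial.rootMultiplicity α B.det = 0 :=
        Polynomial.rootMultiplicity_eq_zero hdetB
      rw [← hRK, hk] at h1
      omega
    omega
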